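/- Let Γ(x) be a fundamental matrix of Φ' + p·Φ = 0 on [a,c] with D = A·Γ(a) + C·Γ(c) nonsingular. Then for every continuous f : [a,c] → ℝⁿ and every γ ∈ ℝⁿ, the boundary value problem Φ'(x) + p(x)·Φ(x) = f(x), A·Φ(a) + C·Φ(c) = γ has a unique C¹ solution. -/

import Mathlib

open Matrix Set

lemma bvpAux_mulVec_norm_le {n : ℕ} (M : Matrix (Fin n) (Fin n) ℝ) {B : ℝ} (hB0 : 0 ≤ B)
    (hB : ∀ i, ∑ j, |M i j| ≤ B) (v : Fin n → ℝ) : ‖M *ᵥ v‖ ≤ B * ‖v‖ := by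
  rw [pi_norm_le_iff_of_nonneg (by positivity)]
  intro i
  have h1 : ‖(M *ᵥ v) i‖ = |∑ j, M i j * v j| := rfl
  rw [h1]
  calc |∑ j, M i j * v j| ≤ ∑ j, |M i j * v j| := Finset.abs_sum_le_sum_abs _ _
    _ ≤ ∑ j, |M i j| * ‖v‖ := by
        refine Finset.sum_le_sum fun j _ => ?_
        rw [abs_mul]
        exact mul_le_mul_of_nonneg_left (norm_le_pi_norm v j) (abs_nonneg _)
    _ = (∑ j, |M i j|) * ‖v‖ := by rw [Finset.sum_mul]
    _ ≤ B * ‖v‖ := mul_le_mul_of_nonneg_right (hB i) (norm_nonneg _)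

lemma bvpAux_hasDerivAt_mulVec {n : ℕ} {Γ : ℝ → Matrix (Fin n) (Fin n) ℝ}
    {Γ' : Matrix (Fin n) (Fin n) ℝ} {u : ℝ → Fin n → ℝ} {u' : Fin n → ℝ} {x : ℝ}
    (hΓ : ∀ i j, HasDerivAt (fun y => Γ y i j) (Γ' i j) x)
    (hu : HasDerivAt u u' x) :
    HasDerivAt (fun y => Γ y *ᵥ u y) (Γ' *ᵥ u x + Γ x *ᵥ u') x := by
  rw [hasDerivAt_pi]
  intro i
  have h : ∀ y, (Γ y *ᵥ u y) i = ∑ j, Γ y i j * u y j := fun y => rfl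
  simp only [h]
  have : (Γ' *ᵥ u x + Γ x *ᵥ u') i = ∑ j, (Γ' i j * u x j + Γ x i j * u' j) := by
    simp [Matrix.mulVec, dotProduct, Finset.sum_add_distrib]
  rw [this]
  exact HasDerivAt.fun_sum fun j _ => (hΓ i j).mul ((hasDerivAt_pi.1 hu) j)

theorem bvp_exists_unique_solution
    {n : ℕ} {a c : ℝ} (hac : a < c)
    (p : ℝ → Matrix (Fin n) (Fin n) ℝ)
    (hp : ∀ i j, ContinuousOn (fun x => p x i j) (Icc a c))
    (A C : Matrix (Fin n) (Fin n) ℝ)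
    (Γ : ℝ → Matrix (Fin n) (Fin n) ℝ)
    (hΓinv : ∀ x ∈ Icc a c, IsUnit (Γ x).det)
    (hΓode : ∀ x ∈ Icc a c, ∀ i j,
      HasDerivAt (fun y => Γ y i j) (-(p x * Γ x) i j) x)
    (hD : IsUnit (A * Γ a + C * Γ c).det) :
    ∀ f : ℝ → Fin n → ℝ, ContinuousOn f (Icc a c) →
    ∀ γ : Fin n → ℝ,
      ∃ Φ : ℝ → Fin n → ℝ,
        ((∀ x ∈ Icc a c, HasDerivAt Φ (f x - p x *ᵥ Φ x) x) ∧
          A *ᵥ Φ a + C *ᵥ Φ c = γ) ∧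
        ∀ Ψ : ℝ → Fin n → ℝ,
          (∀ x ∈ Icc a c, HasDerivAt Ψ (f x - p x *ᵥ Ψ x) x) →
          A *ᵥ Ψ a + C *ᵥ Ψ c = γ →
          ∀ x ∈ Icc a c, Ψ x = Φ x := by
  intro f hf γ
  have hle : a ≤ c := hac.le
  have ha_mem : a ∈ Icc a c := left_mem_Icc.2 hle
  have hc_mem : c ∈ Icc a c := right_mem_Icc.2 hle
  -- projection onto the interval
  set π : ℝ → ℝ := fun x => ↑(projIcc a c hle x) with hπ_def
  have hπcont : Continuous π := continuous_subtype_val.comp (continuous_projIcc)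
  have hπmem : ∀ x, π x ∈ Icc a c := fun x => (projIcc a c hle x).2
  have hπid : ∀ x ∈ Icc a c, π x = x := fun x hx => by rw [hπ_def]; simp [projIcc_of_mem hle hx]
  -- continuity of Γ
  have hΓcont : ∀ i j, ContinuousOn (fun x => Γ x i j) (Icc a c) :=
    fun i j x hx => ((hΓode x hx i j).continuousAt).continuousWithinAt
  have hΓe : Continuous fun x => Γ (π x) := by
    refine continuous_matrix fun i j => ?_
    exact (hΓcont i j).comp_continuous hπcont hπmem
  have hdetne : ∀ x, (Γ (π x)).det ≠ 0 := fun x => isUnit_iff_ne_zero.mp (hΓinv _ (hπmem x))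
  have hGinvCont : Continuous fun x => (Γ (π x))⁻¹ := by
    have heq : (fun x => (Γ (π x))⁻¹)
        = fun x => ((Γ (π x)).det)⁻¹ • (Γ (π x)).adjugate := by
      funext x
      rw [Matrix.inv_def, Ring.inverse_eq_inv']
    rw [heq]
    exact (hΓe.matrix_det.inv₀ hdetne).smul hΓe.matrix_adjugate
  have hfe : Continuous fun x => f (π x) := hf.comp_continuous hπcont hπmem
  -- the integrand for variation of parameters
  set g : ℝ → Fin n → ℝ := fun x => (Γ (π x))⁻¹ *ᵥ f (π x) with hg_def
  have hgcont : Continuous g := hGinvCont.matrix_mulVec hfe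
  set I : ℝ → Fin n → ℝ := fun x => ∫ s in a..x, g s with hI_def
  have hI : ∀ x : ℝ, HasDerivAt I (g x) x := fun x =>
    intervalIntegral.integral_hasDerivAt_right (hgcont.intervalIntegrable _ _)
      hgcont.stronglyMeasurable.stronglyMeasurableAtFilter hgcont.continuousAt
  obtain ⟨w, hDw⟩ : ∃ w : Fin n → ℝ,
      (A * Γ a + C * Γ c) *ᵥ w = γ - (C * Γ c) *ᵥ I c :=
    ⟨(A * Γ a + C * Γ c)⁻¹ *ᵥ (γ - (C * Γ c) *ᵥ I c), by
      rw [Matrix.mulVec_mulVec, Matrix.mul_nonsing_inv _ hD, Matrix.one_mulVec]⟩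
  set Φ : ℝ → Fin n → ℝ := fun x => Γ x *ᵥ (w + I x) with hΦ_def
  -- Φ solves the ODE
  have hΦode : ∀ x ∈ Icc a c, HasDerivAt Φ (f x - p x *ᵥ Φ x) x := by
    intro x hx
    have hu : HasDerivAt (fun y => w + I y) (g x) x := (hI x).const_add w
    have h := bvpAux_hasDerivAt_mulVec (hΓode x hx) hu
    have hπx : π x = x := hπid x hx
    have h1 : Γ x *ᵥ g x = f x := by
      show Γ x *ᵥ ((Γ (π x))⁻¹ *ᵥ f (π x)) = f x
      rw [hπx, Matrix.mulVec_mulVec, Matrix.mul_nonsing_inv _ (hΓinv x hx), Matrix.one_mulVec]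
    have h2 : (-(p x * Γ x)) *ᵥ (w + I x) = -(p x *ᵥ Φ x) := by
      rw [Matrix.neg_mulVec, ← Matrix.mulVec_mulVec]
    have key : (fun i j => (-(p x * Γ x)) i j) *ᵥ (w + I x) + Γ x *ᵥ g x
        = f x - p x *ᵥ Φ x := by
      have he : (fun i j => (-(p x * Γ x)) i j) = -(p x * Γ x) := rfl
      rw [he, h1, h2, neg_add_eq_sub]
    exact key ▸ h
  -- boundary value
  have hΦa : Φ a = Γ a *ᵥ w := by
    show Γ a *ᵥ (w + I a) = Γ a *ᵥ w
    have : I a = 0 := intervalIntegral.integral_same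
    rw [this, add_zero]
  have hΦbc : A *ᵥ Φ a + C *ᵥ Φ c = γ := by
    have hΦc : Φ c = Γ c *ᵥ w + Γ c *ᵥ I c := by
      show Γ c *ᵥ (w + I c) = _
      rw [Matrix.mulVec_add]
    have step : A *ᵥ Φ a + C *ᵥ Φ c
        = (A * Γ a + C * Γ c) *ᵥ w + (C * Γ c) *ᵥ I c := by
      rw [hΦa, hΦc, Matrix.mulVec_add, Matrix.add_mulVec, Matrix.mulVec_mulVec,
        Matrix.mulVec_mulVec, Matrix.mulVec_mulVec]
      abel
    rw [step, hDw]
    abel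
  refine ⟨Φ, ⟨hΦode, hΦbc⟩, ?_⟩
  -- uniqueness
  intro Ψ hΨode hΨbc
  -- Lipschitz bound for p on the interval
  have hqcont : ContinuousOn (fun y => ∑ i, ∑ j, |p y i j|) (Icc a c) := by
    refine continuousOn_finset_sum _ fun i _ => ?_
    exact continuousOn_finset_sum _ fun j _ => (hp i j).abs
  obtain ⟨B, hB⟩ := isCompact_Icc.exists_bound_of_continuousOn hqcont
  have hB0 : 0 ≤ B := le_trans (norm_nonneg _) (hB a ha_mem)
  have hBrow : ∀ y ∈ Icc a c, ∀ i, ∑ j, |p y i j| ≤ B := by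
    intro y hy i
    calc ∑ j, |p y i j| ≤ ∑ i, ∑ j, |p y i j| :=
          Finset.single_le_sum (f := fun i => ∑ j, |p y i j|)
            (fun i _ => Finset.sum_nonneg fun j _ => abs_nonneg _) (Finset.mem_univ i)
      _ ≤ B := le_trans (le_abs_self _) (hB y hy)
  set v : ℝ → (Fin n → ℝ) → (Fin n → ℝ) := fun t y => -(p (π t) *ᵥ y) with hv_def
  have hKv : ∀ t, LipschitzWith B.toNNReal (v t) := by
    intro t
    refine LipschitzWith.of_dist_le_mul fun y z => ?_
    have : v t y - v t z = p (π t) *ᵥ (z - y) := by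
      simp [hv_def, Matrix.mulVec_sub]
      abel
    rw [dist_eq_norm, this, Real.coe_toNNReal _ hB0, dist_eq_norm]
    calc ‖p (π t) *ᵥ (z - y)‖ ≤ B * ‖z - y‖ :=
          bvpAux_mulVec_norm_le _ hB0 (hBrow _ (hπmem t)) _
      _ = B * ‖y - z‖ := by rw [norm_sub_rev]
  -- difference of the two solutions
  set Δ : ℝ → Fin n → ℝ := fun x => Ψ x - Φ x with hΔ_def
  have hΔode : ∀ t ∈ Icc a c, HasDerivAt Δ (v t (Δ t)) t := by
    intro t ht
    have h := (hΨode t ht).sub (hΦode t ht)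
    have key : f t - p t *ᵥ Ψ t - (f t - p t *ᵥ Φ t) = v t (Δ t) := by
      show _ = -(p (π t) *ᵥ (Ψ t - Φ t))
      rw [hπid t ht, Matrix.mulVec_sub]
      abel
    exact key ▸ h
  obtain ⟨u₀, hu₀⟩ : ∃ u₀ : Fin n → ℝ, Γ a *ᵥ u₀ = Δ a :=
    ⟨(Γ a)⁻¹ *ᵥ Δ a, by
      rw [Matrix.mulVec_mulVec, Matrix.mul_nonsing_inv _ (hΓinv a ha_mem),
        Matrix.one_mulVec]⟩
  set Θ : ℝ → Fin n → ℝ := fun x => Γ x *ᵥ u₀ with hΘ_def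
  have hΘode : ∀ t ∈ Icc a c, HasDerivAt Θ (v t (Θ t)) t := by
    intro t ht
    have h := bvpAux_hasDerivAt_mulVec (hΓode t ht) (hasDerivAt_const t u₀)
    have key : (fun i j => (-(p t * Γ t)) i j) *ᵥ u₀ + Γ t *ᵥ 0 = v t (Θ t) := by
      show (fun i j => (-(p t * Γ t)) i j) *ᵥ u₀ + Γ t *ᵥ 0
          = -(p (π t) *ᵥ (Γ t *ᵥ u₀))
      have he : (fun i j => (-(p t * Γ t)) i j) = -(p t * Γ t) := rfl
      rw [he, hπid t ht, Matrix.mulVec_zero, add_zero, Matrix.neg_mulVec,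
        Matrix.mulVec_mulVec]
    exact key ▸ h
  have hΘa : Δ a = Θ a := hu₀.symm
  have hEq : EqOn Δ Θ (Icc a c) := by
    refine ODE_solution_unique hKv ?_ ?_ ?_ ?_ hΘa
    · exact fun t ht => ((hΔode t ht).continuousAt).continuousWithinAt
    · exact fun t ht => (hΔode t (mem_Icc_of_Ico ht)).hasDerivWithinAt
    · exact fun t ht => ((hΘode t ht).continuousAt).continuousWithinAt
    · exact fun t ht => (hΘode t (mem_Icc_of_Ico ht)).hasDerivWithinAt
  -- the boundary condition forces u₀ = 0
  have hΔbc : A *ᵥ Δ a + C *ᵥ Δ c = 0 := by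
    simp only [hΔ_def, Matrix.mulVec_sub]
    rw [show A *ᵥ Ψ a - A *ᵥ Φ a + (C *ᵥ Ψ c - C *ᵥ Φ c)
        = (A *ᵥ Ψ a + C *ᵥ Ψ c) - (A *ᵥ Φ a + C *ᵥ Φ c) by abel, hΨbc, hΦbc, sub_self]
  have hΔaΘ : Δ a = Γ a *ᵥ u₀ := hEq ha_mem
  have hΔcΘ : Δ c = Γ c *ᵥ u₀ := hEq hc_mem
  have hDu₀ : (A * Γ a + C * Γ c) *ᵥ u₀ = 0 := by
    calc (A * Γ a + C * Γ c) *ᵥ u₀ = A *ᵥ (Γ a *ᵥ u₀) + C *ᵥ (Γ c *ᵥ u₀) := by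
          rw [Matrix.add_mulVec, Matrix.mulVec_mulVec, Matrix.mulVec_mulVec]
      _ = A *ᵥ Δ a + C *ᵥ Δ c := by rw [← hΔaΘ, ← hΔcΘ]
      _ = 0 := hΔbc
  have hu₀0 : u₀ = 0 := by
    have := congrArg (fun z => (A * Γ a + C * Γ c)⁻¹ *ᵥ z) hDu₀
    simpa [Matrix.mulVec_mulVec, Matrix.nonsing_inv_mul _ hD, Matrix.one_mulVec,
      Matrix.mulVec_zero] using this
  intro x hx
  have : Δ x = 0 := by
    rw [hEq hx, hΘ_def]
    show Γ x *ᵥ u₀ = 0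
    rw [hu₀0, Matrix.mulVec_zero]
  have := sub_eq_zero.mp this
  exact this
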